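/- arXiv:1808.03056 — 3 statements merged into one kernel-verified Lean document; each statement's English description precedes it below -/
import Mathlib

section
/- Let A be a C*-algebra and let a, b ∈ A be self-adjoint. If ρ(a,b) = 0 then a = b. -/
set_option linter.unusedSectionVars false
set_option maxHeartbeats 1000000
set_option synthInstance.maxHeartbeats 400000

open NormedSpace Filter Complex
open scoped Nat

/-- The iterated commutator `C_{a,b}^n` applied to `1`, where `C_{a,b}(x) = a*x - x*b`. -/
noncomputable def citer {A : Type*} [Ring A] (a b : A) (n : ℕ) : A :=
  (fun x => a * x - x * b)^[n] 1

/-- `ρ(a,b) = limsup_n ‖C_{a,b}^n(1)‖^{1/n}`. -/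
noncomputable def rho {A : Type*} [NormedRing A] (a b : A) : ℝ :=
  Filter.limsup (fun n : ℕ => ‖citer a b n‖ ^ ((n : ℝ)⁻¹)) Filter.atTop

section Aux

variable {A : Type*} [NormedRing A] [CompleteSpace A] [NormedAlgebra ℂ A]

noncomputable def Tder (a b : A) : A →L[ℂ] A :=
  ContinuousLinearMap.mul ℂ A a - (ContinuousLinearMap.mul ℂ A).flip b

lemma Tder_apply (a b x : A) : Tder a b x = a * x - x * b := by
  simp [Tder]

lemma citer_eq (a b : A) (n : ℕ) : citer a b n = ((Tder a b) ^ n) 1 := by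
  induction n with
  | zero => simp [citer]
  | succ n ih =>
    rw [citer, Function.iterate_succ_apply', pow_succ', ContinuousLinearMap.mul_apply, Tder_apply,
      ← ih]; rfl

noncomputable def Lrh : A →+* (A →L[ℂ] A) where
  toFun a := ContinuousLinearMap.mul ℂ A a
  map_one' := by ext x; simp
  map_mul' a b := by ext x; simp [mul_assoc]
  map_zero' := by ext x; simp
  map_add' a b := by ext x; simp [add_mul]

noncomputable def Rrh : Aᵐᵒᵖ →+* (A →L[ℂ] A) where
  toFun b := (ContinuousLinearMap.mul ℂ A).flip b.unop
  map_one' := by ext x; simp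
  map_mul' a b := by ext x; simp [mul_assoc]
  map_zero' := by ext x; simp
  map_add' a b := by ext x; simp [mul_add]

lemma Lrh_cont : Continuous (Lrh (A := A)) := (ContinuousLinearMap.mul ℂ A).continuous

lemma Rrh_cont : Continuous (Rrh (A := A)) :=
  (ContinuousLinearMap.mul ℂ A).flip.continuous.comp MulOpposite.continuous_unop

lemma exp_T_apply (a b : A) (z : ℂ) :
    exp (z • Tder a b) 1 = exp (z • a) * exp (-(z • b)) := by
  have hz : z • Tder a b = Lrh (z • a) + Rrh (MulOpposite.op (-(z • b))) := by
    ext x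
    simp [Tder, Lrh, Rrh, smul_sub, smul_mul_assoc, mul_smul_comm, sub_eq_add_neg]
  have hcomm : Commute (Lrh (z • a)) (Rrh (MulOpposite.op (-(z • b)))) := by
    apply ContinuousLinearMap.ext
    intro x
    show Lrh (z • a) (Rrh _ x) = Rrh _ (Lrh (z • a) x)
    simp [Lrh, Rrh, mul_assoc, mul_smul_comm, smul_mul_assoc]
  let +nondep : NormedAlgebra ℚ A := .restrictScalars ℚ ℂ A
  let +nondep : NormedAlgebra ℚ (A →L[ℂ] A) := .restrictScalars ℚ ℂ (A →L[ℂ] A)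
  rw [hz, exp_add_of_commute hcomm, ← map_exp Lrh Lrh_cont,
    ← map_exp (Rrh (A := A)) Rrh_cont, exp_op]
  show (ContinuousLinearMap.mul ℂ A (exp (z • a)))
      ((ContinuousLinearMap.mul ℂ A).flip (exp (-(z • b))) 1) = _
  simp

lemma smul_pow_apply (T : A →L[ℂ] A) (z : ℂ) (n : ℕ) (x : A) :
    ((z • T) ^ n) x = z ^ n • ((T ^ n) x) := by
  induction n with
  | zero => simp
  | succ n ih =>
    rw [pow_succ', ContinuousLinearMap.mul_apply, ContinuousLinearMap.smul_apply, ih, map_smul,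
      smul_smul, pow_succ' T n, ContinuousLinearMap.mul_apply, pow_succ' z n]

lemma exp_T_tsum (a b : A) (z : ℂ) :
    exp (z • Tder a b) 1 = ∑' (n : ℕ), (((n ! : ℂ))⁻¹ * z ^ n) • citer a b n := by
  have hs : Summable fun n : ℕ => ((n ! : ℂ))⁻¹ • (z • Tder a b) ^ n :=
    expSeries_summable' (𝕂 := ℂ) _
  rw [← ContinuousLinearMap.apply_apply (𝕜 := ℂ) (Fₗ := A) (1 : A) (exp (z • Tder a b)),
    exp_eq_tsum ℂ, ContinuousLinearMap.map_tsum _ hs]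
  congr 1
  funext n
  rw [map_smul, ContinuousLinearMap.apply_apply, smul_pow_apply, ← citer_eq, smul_smul]
lemma citer_norm_le (a b : A) (n : ℕ) :
    ‖citer a b n‖ ≤ (‖a‖ + ‖b‖) ^ n * ‖(1 : A)‖ := by
  induction n with
  | zero => simp [citer]
  | succ n ih =>
    rw [citer, Function.iterate_succ_apply']
    calc ‖a * ((fun x => a * x - x * b)^[n] 1) - ((fun x => a * x - x * b)^[n] 1) * b‖
        ≤ ‖a * citer a b n‖ + ‖citer a b n * b‖ := norm_sub_le _ _
      _ ≤ ‖a‖ * ‖citer a b n‖ + ‖citer a b n‖ * ‖b‖ :=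
          add_le_add (norm_mul_le _ _) (norm_mul_le _ _)
      _ = (‖a‖ + ‖b‖) * ‖citer a b n‖ := by ring
      _ ≤ (‖a‖ + ‖b‖) * ((‖a‖ + ‖b‖) ^ n * ‖(1 : A)‖) := by
          apply mul_le_mul_of_nonneg_left ih (by positivity)
      _ = (‖a‖ + ‖b‖) ^ (n + 1) * ‖(1 : A)‖ := by ring

lemma citer_bound (a b : A) (h : rho a b = 0) {ε : ℝ} (hε : 0 < ε) :
    ∃ M : ℝ, 1 ≤ M ∧ ∀ n, ‖citer a b n‖ ≤ M * ε ^ n := by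
  set K := ‖a‖ + ‖b‖ with hK
  have hK0 : 0 ≤ K := by positivity
  set u := fun n : ℕ => ‖citer a b n‖ ^ ((n : ℝ)⁻¹) with hu
  have hbdd : IsBoundedUnder (· ≤ ·) atTop u := by
    refine isBoundedUnder_of ⟨max 1 (K * max 1 ‖(1 : A)‖), fun n => ?_⟩
    match n with
    | 0 => simp [u, citer, le_max_left]
    | (n+1) =>
      have hn0 : ((n+1 : ℕ) : ℝ) ≠ 0 := by positivity
      have h1 : u (n+1) ≤ ((K ^ (n+1) * ‖(1 : A)‖)) ^ (((n+1 : ℕ) : ℝ)⁻¹) :=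
        Real.rpow_le_rpow (norm_nonneg _) (citer_norm_le a b (n+1)) (by positivity)
      have h2 : ((K ^ (n+1) * ‖(1 : A)‖)) ^ (((n+1 : ℕ) : ℝ)⁻¹)
          = K * ‖(1 : A)‖ ^ (((n+1 : ℕ) : ℝ)⁻¹) := by
        rw [Real.mul_rpow (by positivity) (norm_nonneg _), ← Real.rpow_natCast K (n+1),
          ← Real.rpow_mul hK0, mul_inv_cancel₀ hn0, Real.rpow_one]
      have h3 : ‖(1 : A)‖ ^ (((n+1 : ℕ) : ℝ)⁻¹) ≤ max 1 ‖(1 : A)‖ := by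
        rcases le_total ‖(1 : A)‖ 1 with hle | hle
        · exact le_trans (Real.rpow_le_one (norm_nonneg _) hle (by positivity)) (le_max_left _ _)
        · refine le_trans ?_ (le_max_right _ _)
          calc ‖(1 : A)‖ ^ (((n+1 : ℕ) : ℝ)⁻¹) ≤ ‖(1 : A)‖ ^ (1 : ℝ) := by
                apply Real.rpow_le_rpow_of_exponent_le hle
                rw [inv_le_one_iff₀]
                right
                exact_mod_cast Nat.one_le_iff_ne_zero.2 (Nat.succ_ne_zero n)
            _ = ‖(1 : A)‖ := Real.rpow_one _
      refine le_trans h1 (le_trans (le_of_eq h2) (le_max_of_le_right ?_))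
      exact mul_le_mul_of_nonneg_left h3 hK0
  have hev : ∀ᶠ n in atTop, u n < ε := by
    apply eventually_lt_of_limsup_lt _ hbdd
    rw [show limsup u atTop = rho a b from rfl, h]
    exact hε
  obtain ⟨N, hN⟩ := eventually_atTop.mp hev
  set N' := max N 1 with hN'
  have key : ∀ n, N' ≤ n → ‖citer a b n‖ ≤ ε ^ n := by
    intro n hn
    have hn1 : 1 ≤ n := le_trans (le_max_right N 1) hn
    have hne : n ≠ 0 := Nat.one_le_iff_ne_zero.mp hn1
    have := hN n (le_trans (le_max_left N 1) hn)
    have heq : (u n) ^ n = ‖citer a b n‖ :=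
      Real.rpow_inv_natCast_pow (norm_nonneg _) hne
    rw [← heq]
    exact pow_le_pow_left₀ (Real.rpow_nonneg (norm_nonneg _) _) this.le n
  refine ⟨1 + ∑ k ∈ Finset.range N', ‖citer a b k‖ / ε ^ k, ?_, ?_⟩
  · have : 0 ≤ ∑ k ∈ Finset.range N', ‖citer a b k‖ / ε ^ k :=
      Finset.sum_nonneg fun k _ => by positivity
    linarith
  · intro n
    by_cases hn : n < N'
    · have h1 : ‖citer a b n‖ / ε ^ n ≤ ∑ k ∈ Finset.range N', ‖citer a b k‖ / ε ^ k :=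
        Finset.single_le_sum (f := fun k => ‖citer a b k‖ / ε ^ k) (fun k _ => by positivity) (Finset.mem_range.2 hn)
      have h2 : ‖citer a b n‖ = (‖citer a b n‖ / ε ^ n) * ε ^ n := by
        field_simp
      rw [h2]
      apply mul_le_mul_of_nonneg_right _ (by positivity)
      linarith
    · push_neg at hn
      refine le_trans (key n hn) ?_
      have : 0 ≤ ∑ k ∈ Finset.range N', ‖citer a b k‖ / ε ^ k :=
        Finset.sum_nonneg fun k _ => by positivity
      nlinarith [pow_nonneg hε.le n]

lemma norm_exp_mul_le (a b : A) {ε M : ℝ} (hε : 0 < ε) (hM : 0 ≤ M)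
    (hb : ∀ n, ‖citer a b n‖ ≤ M * ε ^ n) (z : ℂ) :
    ‖exp (z • a) * exp (-(z • b))‖ ≤ M * Real.exp (ε * ‖z‖) := by
  rw [← exp_T_apply, exp_T_tsum]
  have hle : ∀ n : ℕ, ‖(((n ! : ℂ))⁻¹ * z ^ n) • citer a b n‖
      ≤ M * ((ε * ‖z‖) ^ n / n !) := by
    intro n
    rw [norm_smul]
    have h1 : ‖((n ! : ℂ))⁻¹ * z ^ n‖ = ((n ! : ℝ))⁻¹ * ‖z‖ ^ n := by
      simp [norm_mul, norm_inv, norm_pow]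
    rw [h1]
    calc ((n ! : ℝ))⁻¹ * ‖z‖ ^ n * ‖citer a b n‖
        ≤ ((n ! : ℝ))⁻¹ * ‖z‖ ^ n * (M * ε ^ n) := by
          apply mul_le_mul_of_nonneg_left (hb n) (by positivity)
      _ = M * ((ε * ‖z‖) ^ n / n !) := by
          rw [mul_pow]; field_simp
  have hsum2 : Summable (fun n : ℕ => M * ((ε * ‖z‖) ^ n / n !)) :=
    (Real.summable_pow_div_factorial _).mul_left M
  have hsum1 : Summable (fun n : ℕ => ‖(((n ! : ℂ))⁻¹ * z ^ n) • citer a b n‖) :=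
    Summable.of_nonneg_of_le (fun n => norm_nonneg _) hle hsum2
  calc ‖∑' (n : ℕ), (((n ! : ℂ))⁻¹ * z ^ n) • citer a b n‖
      ≤ ∑' (n : ℕ), ‖(((n ! : ℂ))⁻¹ * z ^ n) • citer a b n‖ := norm_tsum_le_tsum_norm hsum1
    _ ≤ ∑' (n : ℕ), M * ((ε * ‖z‖) ^ n / n !) := Summable.tsum_le_tsum hle hsum1 hsum2
    _ = M * Real.exp (ε * ‖z‖) := by
        rw [tsum_mul_left]
        congr 1
        rw [Real.exp_eq_exp_ℝ, exp_eq_tsum_div]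

end Aux

section Star

variable {A : Type*} [NormedRing A] [StarRing A] [CStarRing A] [CompleteSpace A]
    [NormedAlgebra ℂ A] [StarModule ℂ A]

lemma norm_f_axis [Nontrivial A] (a b : A) (ha : IsSelfAdjoint a) (hb : IsSelfAdjoint b) (x : ℝ) :
    ‖exp (((x : ℂ) * I) • a) * exp (-(((x : ℂ) * I) • b))‖ ≤ 1 := by
  have hsk : ((x : ℂ) * I) ∈ skewAdjoint ℂ := by
    rw [skewAdjoint.mem_iff]
    simp [Complex.star_def, map_mul, Complex.conj_I, Complex.conj_ofReal]
  have h1 : ((x : ℂ) * I) • a ∈ skewAdjoint A := ha.smul_mem_skewAdjoint hsk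
  have h2 : -(((x : ℂ) * I) • b) ∈ skewAdjoint A := neg_mem (hb.smul_mem_skewAdjoint hsk)
  let +nondep : NormedAlgebra ℚ A := .restrictScalars ℚ ℂ A
  have u1 := exp_mem_unitary_of_mem_skewAdjoint h1
  have u2 := exp_mem_unitary_of_mem_skewAdjoint h2
  calc ‖exp (((x : ℂ) * I) • a) * exp (-(((x : ℂ) * I) • b))‖
      ≤ ‖exp (((x : ℂ) * I) • a)‖ * ‖exp (-(((x : ℂ) * I) • b))‖ := norm_mul_le _ _
    _ ≤ 1 := by
        rw [CStarRing.norm_of_mem_unitary u1, CStarRing.norm_of_mem_unitary u2, mul_one]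

lemma half_plane_bound [Nontrivial A] (a b : A) (ha : IsSelfAdjoint a) (hb : IsSelfAdjoint b)
    (h : rho a b = 0) {z : ℂ} (hz : 0 ≤ z.re) :
    ‖exp (z • a) * exp (-(z • b))‖ ≤ 1 := by
  set f : ℂ → A := fun w => exp (w • a) * exp (-(w • b)) with hf
  have hdiff : Differentiable ℂ f := by
    intro w
    have d1 : DifferentiableAt ℂ (fun u : ℂ => exp (u • a)) w :=
      (hasDerivAt_exp_smul_const (𝕂 := ℂ) a w).differentiableAt
    have d2 : DifferentiableAt ℂ (fun u : ℂ => exp (-(u • b))) w := by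
      have heq : (fun u : ℂ => exp (-(u • b))) = fun u : ℂ => exp (u • (-b)) := by
        funext u; rw [smul_neg]
      rw [heq]
      exact (hasDerivAt_exp_smul_const (𝕂 := ℂ) (-b) w).differentiableAt
    exact d1.mul d2
  have key : ∀ ε : ℝ, 0 < ε → ‖f z‖ ≤ Real.exp (2 * ε * z.re) := by
    intro ε hε
    obtain ⟨M, hM1, hM⟩ := citer_bound a b h hε
    set g : ℂ → A := fun w => Complex.exp ((↑(-(2 * ε)) : ℂ) * w) • f w with hg
    have hgn : ∀ w : ℂ, ‖g w‖ = Real.exp (-(2 * ε) * w.re) * ‖f w‖ := by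
      intro w
      rw [hg]
      simp only [norm_smul, Complex.norm_exp, Complex.re_ofReal_mul]
    have hfM : ∀ w : ℂ, ‖f w‖ ≤ M * Real.exp (ε * ‖w‖) := fun w =>
      norm_exp_mul_le a b hε (le_trans zero_le_one hM1) hM w
    have hPL : ‖g z‖ ≤ 1 := by
      apply PhragmenLindelof.right_half_plane_of_tendsto_zero_on_real (f := g) (C := 1)
        ?_ ?_ ?_ ?_ hz
      · apply Differentiable.diffContOnCl
        exact ((Complex.differentiable_exp.comp ((differentiable_id.const_mul _))).smul hdiff)
      · refine ⟨1, one_lt_two, 3 * ε, ?_⟩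
        apply Asymptotics.IsBigO.of_bound M
        apply Filter.Eventually.of_forall
        intro w
        have h1 : ‖g w‖ ≤ Real.exp (2 * ε * ‖w‖) * (M * Real.exp (ε * ‖w‖)) := by
          rw [hgn w]
          apply mul_le_mul _ (hfM w) (norm_nonneg _) (Real.exp_nonneg _)
          apply Real.exp_le_exp.2
          have := Complex.abs_re_le_norm w
          have := neg_abs_le w.re
          nlinarith
        have h2 : Real.exp (2 * ε * ‖w‖) * (M * Real.exp (ε * ‖w‖))
            = M * Real.exp (3 * ε * ‖w‖) := by
          rw [show (3 : ℝ) * ε * ‖w‖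
              = 2 * ε * ‖w‖ + ε * ‖w‖ by ring, Real.exp_add]
          ring
        rw [h2] at h1
        refine le_trans h1 ?_
        rw [Real.norm_eq_abs, Real.abs_exp, Real.rpow_one]
      · apply squeeze_zero_norm' (a := fun x : ℝ => M * Real.exp (-(ε * x)))
        · filter_upwards [eventually_ge_atTop (0 : ℝ)] with x hx
          have habs : ‖(x : ℂ)‖ = x := by
            rw [Complex.norm_of_nonneg hx]
          calc ‖g x‖ = Real.exp (-(2 * ε) * x) * ‖f x‖ := by
                rw [hgn]; norm_num
            _ ≤ Real.exp (-(2 * ε) * x) * (M * Real.exp (ε * x)) := by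
                apply mul_le_mul_of_nonneg_left _ (Real.exp_nonneg _)
                have := hfM (x : ℂ); rwa [habs] at this
            _ = M * Real.exp (-(ε * x)) := by
                rw [show -(ε * x) = -(2 * ε) * x + ε * x by ring, Real.exp_add]; ring
        · have h0 : Tendsto (fun x : ℝ => -(ε * x)) atTop atBot := by
            apply tendsto_neg_atTop_atBot.comp
            exact Tendsto.const_mul_atTop hε tendsto_id
          have := (Real.tendsto_exp_atBot.comp h0).const_mul M
          simpa using this
      · intro x
        rw [hgn]
        have hre : ((x : ℂ) * I).re = 0 := by simp
        rw [hre, mul_zero, Real.exp_zero, one_mul]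
        exact norm_f_axis a b ha hb x
    have := hgn z
    rw [this] at hPL
    have hexp0 : (0 : ℝ) < Real.exp (-(2 * ε) * z.re) := Real.exp_pos _
    calc ‖f z‖ = Real.exp (2 * ε * z.re) * (Real.exp (-(2 * ε) * z.re) * ‖f z‖) := by
          rw [← mul_assoc, ← Real.exp_add,
            show 2 * ε * z.re + -(2 * ε) * z.re = (0 : ℝ) by ring, Real.exp_zero, one_mul]
      _ ≤ Real.exp (2 * ε * z.re) * 1 := by
          apply mul_le_mul_of_nonneg_left hPL (Real.exp_nonneg _)
      _ = Real.exp (2 * ε * z.re) := mul_one _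
  have hlim : Tendsto (fun ε : ℝ => Real.exp (2 * ε * z.re)) (nhdsWithin 0 (Set.Ioi 0)) (nhds 1) := by
    have hc : Continuous (fun ε : ℝ => Real.exp (2 * ε * z.re)) := by continuity
    have h0 : Real.exp (2 * (0 : ℝ) * z.re) = 1 := by norm_num
    have := hc.tendsto 0
    rw [h0] at this
    exact this.mono_left nhdsWithin_le_nhds
  apply ge_of_tendsto hlim
  filter_upwards [self_mem_nhdsWithin] with ε hε
  exact key ε hε

end Star

lemma citer_neg_neg {A : Type*} [NormedRing A] (a b : A) (n : ℕ) :
    citer (-a) (-b) n = ((-1 : ℤ) ^ n) • citer a b n := by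
  induction n with
  | zero => simp [citer]
  | succ n ih =>
    have h1 : citer (-a) (-b) (n + 1) = -a * citer (-a) (-b) n - citer (-a) (-b) n * -b := by
      conv_lhs => rw [citer, Function.iterate_succ_apply']
      rfl
    have h2 : citer a b (n + 1) = a * citer a b n - citer a b n * b := by
      conv_lhs => rw [citer, Function.iterate_succ_apply']
      rfl
    rw [h1, h2, ih, pow_succ, mul_comm ((-1 : ℤ) ^ n) (-1 : ℤ), mul_smul, mul_smul_comm,
      smul_mul_assoc, ← smul_sub, neg_one_zsmul, ← smul_neg]
    congr 1
    noncomm_ring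

lemma citer_neg_neg_norm {A : Type*} [NormedRing A] (a b : A) (n : ℕ) :
    ‖citer (-a) (-b) n‖ = ‖citer a b n‖ := by
  rw [citer_neg_neg]
  rcases Nat.even_or_odd n with hn | hn
  · rw [hn.neg_one_pow, one_smul]
  · rw [hn.neg_one_pow, neg_one_zsmul, norm_neg]

lemma rho_neg_neg {A : Type*} [NormedRing A] (a b : A) : rho (-a) (-b) = rho a b := by
  unfold rho
  congr 1
  funext n
  rw [citer_neg_neg_norm]

/-- Self-adjoint elements of a C*-algebra with ρ(a,b) = 0 are equal. -/
theorem stmt_10 {A : Type*} [NormedRing A] [StarRing A] [CStarRing A] [CompleteSpace A]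
    [NormedAlgebra ℂ A] [StarModule ℂ A]
    (a b : A) (ha : IsSelfAdjoint a) (hb : IsSelfAdjoint b) (h : rho a b = 0) :
    a = b := by
  rcases subsingleton_or_nontrivial A with hs | hnt
  · exact Subsingleton.elim a b
  have key : ∀ z : ℂ, ‖exp (z • a) * exp (-(z • b))‖ ≤ 1 := by
    intro z
    rcases le_total 0 z.re with hz | hz
    · exact half_plane_bound a b ha hb h hz
    · have h' : rho (-a) (-b) = 0 := by rw [rho_neg_neg]; exact h
      have hz' : 0 ≤ (-z).re := by simp; linarith
      have := half_plane_bound (-a) (-b) ha.neg hb.neg h' hz'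
      simpa [smul_neg, neg_smul] using this
  set f : ℂ → A := fun z => exp (z • a) * exp (z • (-b)) with hf
  have hkey : ∀ z : ℂ, ‖f z‖ ≤ 1 := by
    intro z
    have := key z
    rw [hf]
    simpa [smul_neg] using this
  have hdiff : Differentiable ℂ f := fun w =>
    ((hasDerivAt_exp_smul_const (𝕂 := ℂ) a w).differentiableAt).mul
      ((hasDerivAt_exp_smul_const (𝕂 := ℂ) (-b) w).differentiableAt)
  have hbdd : Bornology.IsBounded (Set.range f) := by
    apply Metric.isBounded_closedBall (x := (0 : A)) (r := 1) |>.subset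
    rintro - ⟨z, rfl⟩
    simpa [Metric.mem_closedBall, dist_zero_right] using hkey z
  have hconst : ∀ z : ℂ, f z = f 0 := fun z => hdiff.apply_eq_apply_of_bounded hbdd z 0
  have hD : HasDerivAt f (exp ((0 : ℂ) • a) * a * exp ((0 : ℂ) • (-b))
      + exp ((0 : ℂ) • a) * (exp ((0 : ℂ) • (-b)) * (-b))) 0 :=
    (hasDerivAt_exp_smul_const (𝕂 := ℂ) a 0).mul (hasDerivAt_exp_smul_const (𝕂 := ℂ) (-b) 0)
  have hD0 : HasDerivAt f 0 0 := by
    have : f = fun _ => f 0 := funext hconst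
    rw [this]
    exact hasDerivAt_const 0 (f 0)
  have := hD.unique hD0
  simp only [zero_smul, NormedSpace.exp_zero, one_mul, mul_one] at this
  rwa [← sub_eq_add_neg, sub_eq_zero] at this
end

section
/- Let A be a C*-algebra and a ∈ A. If ρ(a*, a) = 0, then σ(a) ⊆ ℝ. -/
open NormedSpace Filter

section Aux

variable {A : Type*} [NormedRing A] [CompleteSpace A] [NormedAlgebra ℂ A]

/-- The commutator operator `x ↦ a*x - x*b` as a continuous linear map. -/
noncomputable def commOp (a b : A) : A →L[ℂ] A :=
  ContinuousLinearMap.mul ℂ A a - (ContinuousLinearMap.mul ℂ A).flip b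

lemma commOp_apply (a b x : A) : commOp a b x = a * x - x * b := rfl

lemma citer_eq_pow (a b : A) (n : ℕ) : citer a b n = ((commOp a b) ^ n) 1 := by
  induction n with
  | zero => simp [citer]
  | succ n ih =>
      rw [citer, Function.iterate_succ_apply']
      show commOp a b ((fun x => a * x - x * b)^[n] 1) = _
      rw [show (fun x => a * x - x * b)^[n] 1 = citer a b n from rfl, ih, pow_succ',
        ContinuousLinearMap.mul_apply]

lemma exp_opApply (T : A →L[ℂ] A) (x : A) :
    exp T x = ∑' n : ℕ, ((n.factorial : ℂ)⁻¹) • (T ^ n) x := by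
  have h1 : exp T = ∑' n : ℕ, ((n.factorial : ℂ)⁻¹) • T ^ n := by
    rw [exp_eq_tsum ℂ]
  rw [h1, show (∑' n : ℕ, ((n.factorial : ℂ)⁻¹) • T ^ n) x
      = ContinuousLinearMap.apply ℂ A x (∑' n : ℕ, ((n.factorial : ℂ)⁻¹) • T ^ n) from rfl,
    ContinuousLinearMap.map_tsum _ (expSeries_summable' T)]
  simp [ContinuousLinearMap.apply_apply]

lemma exp_lmul (c x : A) : exp (ContinuousLinearMap.mul ℂ A c) x = exp c * x := by
  rw [exp_opApply]
  have hpow : ∀ n : ℕ, ((ContinuousLinearMap.mul ℂ A c) ^ n) x = c ^ n * x := by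
    intro n
    induction n with
    | zero => simp
    | succ n ih => rw [pow_succ', ContinuousLinearMap.mul_apply,
        ContinuousLinearMap.mul_apply', ih, ← mul_assoc, ← pow_succ']
  simp_rw [hpow]
  rw [exp_eq_tsum ℂ, ← (expSeries_summable' (𝕂 := ℂ) c).tsum_mul_right x]
  simp_rw [smul_mul_assoc]

lemma exp_rmul (c x : A) :
    exp ((ContinuousLinearMap.mul ℂ A).flip c) x = x * exp c := by
  rw [exp_opApply]
  have hpow : ∀ n : ℕ, (((ContinuousLinearMap.mul ℂ A).flip c) ^ n) x = x * c ^ n := by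
    intro n
    induction n with
    | zero => simp
    | succ n ih => rw [pow_succ', ContinuousLinearMap.mul_apply, ih,
        ContinuousLinearMap.flip_apply, ContinuousLinearMap.mul_apply', mul_assoc, ← pow_succ]
  simp_rw [hpow]
  rw [exp_eq_tsum ℂ, ← (expSeries_summable' (𝕂 := ℂ) c).tsum_mul_left x]
  simp_rw [mul_smul_comm]

lemma smul_commOp_eq (a b : A) (t : ℂ) :
    t • commOp a b
      = ContinuousLinearMap.mul ℂ A (t • a) + (ContinuousLinearMap.mul ℂ A).flip (-(t • b)) := by
  ext x
  simp [commOp_apply, smul_sub, smul_mul_assoc, mul_smul_comm, sub_eq_add_neg,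
    ContinuousLinearMap.mul_apply']

lemma exp_smul_commOp_one (a b : A) (t : ℂ) :
    exp (t • commOp a b) 1 = exp (t • a) * exp (-(t • b)) := by
  have hcomm : Commute (ContinuousLinearMap.mul ℂ A (t • a))
      ((ContinuousLinearMap.mul ℂ A).flip (-(t • b))) := by
    ext x
    simp [ContinuousLinearMap.mul_apply, ContinuousLinearMap.mul_apply',
      ContinuousLinearMap.flip_apply, mul_assoc]
  letI : NormedAlgebra ℚ (A →L[ℂ] A) := NormedAlgebra.restrictScalars ℚ ℂ _
  rw [smul_commOp_eq, exp_add_of_commute hcomm, ContinuousLinearMap.mul_apply, exp_rmul,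
    one_mul, exp_lmul]

lemma smul_op_pow_apply (T : A →L[ℂ] A) (t : ℂ) (n : ℕ) (x : A) :
    ((t • T) ^ n) x = t ^ n • (T ^ n) x := by
  induction n with
  | zero => simp
  | succ n ih =>
      rw [pow_succ', ContinuousLinearMap.mul_apply, ih, ContinuousLinearMap.smul_apply,
        map_smul, smul_smul, ← pow_succ', pow_succ' T, ContinuousLinearMap.mul_apply]

lemma exp_smul_commOp_one_eq_tsum (a b : A) (t : ℂ) :
    exp (t • commOp a b) 1
      = ∑' n : ℕ, (((n.factorial : ℂ)⁻¹ * t ^ n)) • citer a b n := by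
  rw [exp_opApply]
  congr 1
  funext n
  rw [smul_op_pow_apply, smul_smul, citer_eq_pow]

lemma norm_exp_mul_exp_le (a b : A) {ε M : ℝ} (hε : 0 < ε) (hM : 0 ≤ M)
    (hc : ∀ n : ℕ, ‖citer a b n‖ ≤ M * ε ^ n) (t : ℂ) :
    ‖exp (t • a) * exp (-(t • b))‖ ≤ M * Real.exp (ε * ‖t‖) := by
  rw [← exp_smul_commOp_one, exp_smul_commOp_one_eq_tsum]
  have hhs : HasSum (fun n : ℕ => M * ((ε * ‖t‖) ^ n / n.factorial))
      (M * Real.exp (ε * ‖t‖)) := by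
    have h1 : Real.exp (ε * ‖t‖) = ∑' n : ℕ, (ε * ‖t‖) ^ n / n.factorial := by
      rw [Real.exp_eq_exp_ℝ, exp_eq_tsum_div]
    rw [h1]
    exact (Real.summable_pow_div_factorial (ε * ‖t‖)).hasSum.mul_left M
  refine tsum_of_norm_bounded hhs fun n => ?_
  have h2 : ‖(((n.factorial : ℂ)⁻¹ * t ^ n)) • citer a b n‖
      = ((n.factorial : ℝ))⁻¹ * ‖t‖ ^ n * ‖citer a b n‖ := by
    rw [norm_smul, norm_mul, norm_inv, norm_pow]
    norm_num
  rw [h2]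
  calc ((n.factorial : ℝ))⁻¹ * ‖t‖ ^ n * ‖citer a b n‖
      ≤ ((n.factorial : ℝ))⁻¹ * ‖t‖ ^ n * (M * ε ^ n) := by
        apply mul_le_mul_of_nonneg_left (hc n)
        positivity
    _ = M * ((ε * ‖t‖) ^ n / n.factorial) := by
        rw [mul_pow]; field_simp

end Aux

/-- If ρ(a*, a) = 0 in a C*-algebra, then σ(a) ⊆ ℝ. -/
theorem stmt_14 {A : Type*} [NormedRing A] [StarRing A] [CStarRing A] [CompleteSpace A]
    [NormedAlgebra ℂ A] [StarModule ℂ A]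
    (a : A) (h : rho (star a) a = 0) :
    ∀ z ∈ spectrum ℂ a, z.im = 0 := by
  intro z hz
  rcases subsingleton_or_nontrivial A with hA | hA
  · exact absurd hz (by simp [spectrum.mem_iff, isUnit_of_subsingleton])
  -- notation
  set c : ℕ → A := fun n => citer (star a) a n with hc
  set f : ℕ → ℝ := fun n => ‖c n‖ ^ ((n : ℝ)⁻¹) with hf
  -- boundedness of f
  set B : ℝ := max 1 (max ‖commOp (star a) a‖ ‖(1 : A)‖) with hB
  have hB1 : (1 : ℝ) ≤ B := le_max_left _ _
  have hB0 : (0 : ℝ) ≤ B := zero_le_one.trans hB1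
  have hcB : ∀ n : ℕ, ‖c n‖ ≤ B ^ (n + 1) := by
    intro n
    have h2 : ‖(commOp (star a) a) ^ n‖ ≤ B ^ n := by
      rcases Nat.eq_zero_or_pos n with hn | hn
      · subst hn
        simpa [ContinuousLinearMap.one_def] using (ContinuousLinearMap.norm_id_le (E := A))
      · calc ‖(commOp (star a) a) ^ n‖ ≤ ‖commOp (star a) a‖ ^ n := norm_pow_le' _ hn
          _ ≤ B ^ n := pow_le_pow_left₀ (norm_nonneg _)
              (le_max_of_le_right (le_max_left _ _)) n
    calc ‖c n‖ = ‖((commOp (star a) a) ^ n) 1‖ := by simp only [hc]; rw [citer_eq_pow]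
      _ ≤ ‖(commOp (star a) a) ^ n‖ * ‖(1 : A)‖ := ((commOp (star a) a) ^ n).le_opNorm 1
      _ ≤ B ^ n * B := mul_le_mul h2 (le_max_of_le_right (le_max_right _ _))
          (norm_nonneg _) (pow_nonneg hB0 n)
      _ = B ^ (n + 1) := by rw [pow_succ]
  have hbdd : IsBoundedUnder (· ≤ ·) atTop f := by
    refine ⟨B ^ 2, eventually_atTop.2 ⟨0, fun n _ => ?_⟩⟩
    have h1 : f n ≤ (B ^ (n + 1)) ^ ((n : ℝ)⁻¹) :=
      Real.rpow_le_rpow (norm_nonneg _) (hcB n) (by positivity)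
    refine h1.trans ?_
    rw [← Real.rpow_natCast B (n + 1), ← Real.rpow_mul hB0, ← Real.rpow_natCast B 2]
    apply Real.rpow_le_rpow_of_exponent_le hB1
    rcases Nat.eq_zero_or_pos n with hn | hn
    · simp [hn]
    · rw [mul_inv_le_iff₀ (by positivity)]
      push_cast
      nlinarith [(Nat.one_le_cast (α := ℝ)).mpr hn]
  -- the key growth estimate
  have key : ∀ ε : ℝ, 0 < ε → ∃ M : ℝ, 1 ≤ M ∧
      ∀ s : ℝ, Real.exp (2 * s * z.im) ≤ M * Real.exp (ε * |s|) := by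
    intro ε hε
    have hlim : limsup f atTop < ε := by
      have hfr : limsup f atTop = rho (star a) a := by simp only [hf, hc, rho]
      rw [hfr, h]; exact hε
    obtain ⟨N₀, hN₀⟩ := eventually_atTop.1 (Filter.eventually_lt_of_limsup_lt hlim hbdd)
    set N := max N₀ 1 with hN
    have hsm : ∀ n : ℕ, N ≤ n → ‖c n‖ ≤ ε ^ n := by
      intro n hn
      have hn1 : 1 ≤ n := le_trans (le_max_right _ _) hn
      have hfn : f n < ε := hN₀ n (le_trans (le_max_left _ _) hn)
      have : ‖c n‖ = (f n) ^ (n : ℕ) := by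
        show ‖c n‖ = (‖c n‖ ^ ((n : ℝ)⁻¹)) ^ (n : ℕ)
        have hn0 : (n : ℝ) ≠ 0 := Nat.cast_ne_zero.2 (by omega)
        rw [← Real.rpow_natCast (‖c n‖ ^ ((n : ℝ)⁻¹)) n, ← Real.rpow_mul (norm_nonneg _),
          inv_mul_cancel₀ hn0, Real.rpow_one]
      rw [this]
      refine pow_le_pow_left₀ ?_ hfn.le n
      show (0:ℝ) ≤ ‖c n‖ ^ ((n : ℝ)⁻¹)
      positivity
    set M : ℝ := 1 + ∑ n ∈ Finset.range N, ‖c n‖ * (ε⁻¹) ^ n with hM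
    have hM1 : 1 ≤ M := by
      rw [hM]
      have : (0 : ℝ) ≤ ∑ n ∈ Finset.range N, ‖c n‖ * (ε⁻¹) ^ n :=
        Finset.sum_nonneg fun n _ => by positivity
      linarith
    have hM0 : 0 ≤ M := zero_le_one.trans hM1
    have hcM : ∀ n : ℕ, ‖c n‖ ≤ M * ε ^ n := by
      intro n
      rcases lt_or_ge n N with hn | hn
      · have h1 : ‖c n‖ * (ε⁻¹) ^ n ≤ ∑ m ∈ Finset.range N, ‖c m‖ * (ε⁻¹) ^ m := by
          refine Finset.single_le_sum (f := fun m => ‖c m‖ * (ε⁻¹) ^ m)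
            (fun m _ => ?_) (Finset.mem_range.2 hn)
          positivity
        have h2 : ‖c n‖ * (ε⁻¹) ^ n ≤ M := by rw [hM]; linarith
        calc ‖c n‖ = (‖c n‖ * (ε⁻¹) ^ n) * ε ^ n := by
              rw [mul_assoc, ← mul_pow, inv_mul_cancel₀ hε.ne', one_pow, mul_one]
          _ ≤ M * ε ^ n := mul_le_mul_of_nonneg_right h2 (by positivity)
      · calc ‖c n‖ ≤ ε ^ n := hsm n hn
          _ ≤ M * ε ^ n := le_mul_of_one_le_left (by positivity) hM1
    refine ⟨M, hM1, fun s => ?_⟩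
    -- the element x = exp(-(i s) • a)
    set t : ℂ := Complex.I * (s : ℂ) with ht
    have hnt : ‖t‖ = |s| := by
      rw [ht, norm_mul, Complex.norm_I, one_mul, Complex.norm_real, Real.norm_eq_abs]
    set x : A := exp (-(t • a)) with hx
    have hstar : star x = exp (t • star a) := by
      rw [hx, star_exp]
      congr 1
      have hconj : star t = -t := by
        rw [ht]; simp [Complex.ext_iff]
      rw [star_neg, star_smul, hconj, neg_smul, neg_neg]
    have hxx : ‖x‖ ^ 2 = ‖exp (t • star a) * exp (-(t • a))‖ := by
      rw [sq, ← CStarRing.norm_star_mul_self, hstar, hx]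
    have hbound : ‖exp (t • star a) * exp (-(t • a))‖ ≤ M * Real.exp (ε * |s|) := by
      rw [← hnt]
      exact norm_exp_mul_exp_le (star a) a hε hM0 hcM t
    -- spectral estimate: exp(s * z.im) ≤ ‖x‖
    have hspec : Real.exp (s * z.im) ≤ ‖x‖ := by
      have hmem : -(t * z) ∈ spectrum ℂ (-(t • a)) := by
        rcases eq_or_ne s 0 with hs | hs
        · rw [ht, hs]
          simpa using spectrum.zero_mem_iff.mpr (not_isUnit_zero (M₀ := A))
        · have htne : -t ≠ 0 := by
            simp [ht, Complex.ext_iff, hs]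
          have := (spectrum.smul_mem_smul_iff (a := a) (s := z)
            (r := Units.mk0 (-t) htne)).2 hz
          simpa [Units.smul_def, neg_smul, neg_mul] using this
      have := spectrum.exp_mem_exp (𝕜 := ℂ) (-(t • a)) hmem
      have hnorm := spectrum.norm_le_norm_of_mem this
      calc Real.exp (s * z.im) = ‖exp (-(t * z))‖ := by
            rw [← Complex.exp_eq_exp_ℂ, Complex.norm_exp]
            congr 1
            rw [ht]
            simp [Complex.mul_re]
        _ ≤ ‖x‖ := by rw [hx]; exact hnorm
    have h2s : Real.exp (2 * s * z.im) = (Real.exp (s * z.im)) ^ 2 := by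
      rw [← Real.exp_nat_mul]; ring_nf
    rw [h2s]
    calc (Real.exp (s * z.im)) ^ 2 ≤ ‖x‖ ^ 2 :=
          pow_le_pow_left₀ (Real.exp_nonneg _) hspec 2
      _ ≤ M * Real.exp (ε * |s|) := hxx ▸ hbound
  -- conclude z.im = 0
  have habs : ∀ ε : ℝ, 0 < ε → |z.im| ≤ ε := by
    intro ε hε
    obtain ⟨M, hM1, hM⟩ := key (ε / 2) (by positivity)
    have hlogM : 0 ≤ Real.log M := Real.log_nonneg hM1
    set T : ℝ := max 1 (Real.log M / ε) with hT
    have hT0 : 0 < T := lt_of_lt_of_le one_pos (le_max_left _ _)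
    set s : ℝ := if 0 ≤ z.im then T else -T with hs
    have habs_s : |s| = T := by
      rw [hs]; split <;> simp [abs_of_pos hT0, hT0.le]
    have hsim : s * z.im = T * |z.im| := by
      rw [hs]; rcases le_or_gt 0 z.im with h1 | h1
      · rw [if_pos h1, abs_of_nonneg h1]
      · rw [if_neg (not_le.2 h1), abs_of_neg h1]; ring
    have := hM s
    rw [habs_s] at this
    have hlog := Real.log_le_log (Real.exp_pos _) this
    rw [Real.log_exp, Real.log_mul (by positivity) (Real.exp_pos _).ne', Real.log_exp] at hlog
    have h1 : 2 * (T * |z.im|) ≤ Real.log M + ε / 2 * T := by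
      calc 2 * (T * |z.im|) = 2 * s * z.im := by rw [← hsim]; ring
        _ ≤ Real.log M + ε / 2 * T := hlog
    have h2 : Real.log M ≤ ε * T := by
      calc Real.log M = (Real.log M / ε) * ε := by field_simp
        _ ≤ T * ε := mul_le_mul_of_nonneg_right (le_max_right _ _) hε.le
        _ = ε * T := mul_comm _ _
    nlinarith [abs_nonneg z.im]
  have : |z.im| ≤ 0 := le_of_forall_pos_le_add (by
    intro ε hε
    simpa using habs ε hε)
  have := abs_nonneg z.im
  have : |z.im| = 0 := le_antisymm ‹|z.im| ≤ 0› (abs_nonneg z.im)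
  exact abs_eq_zero.1 this
end

section
/- Let A be a C*-algebra and a ∈ A invertible. If ρ(a*, a⁻¹) = 0, then σ(a) ⊆ {λ ∈ ℂ : |λ| = 1}. -/
open Filter Finset

lemma citer_zero {A : Type*} [Ring A] (a b : A) : citer a b 0 = 1 := rfl

lemma citer_succ {A : Type*} [Ring A] (a b : A) (n : ℕ) :
    citer a b (n + 1) = a * citer a b n - citer a b n * b :=
  Function.iterate_succ_apply' _ n 1

/-- Binomial expansion for endomorphisms: `f^n = ((f-1)+1)^n`. -/
lemma end_binom {R M : Type*} [CommRing R] [AddCommGroup M] [Module R M]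
    (f : Module.End R M) (n : ℕ) (x : M) :
    (f ^ n) x = ∑ k ∈ Finset.range (n + 1), n.choose k • (((f - 1) ^ k) x) := by
  have h := Commute.add_pow (Commute.one_right (f - 1)) n
  rw [sub_add_cancel] at h
  rw [h, LinearMap.sum_apply]
  refine Finset.sum_congr rfl fun k _ => ?_
  rw [one_pow, mul_one, Module.End.mul_apply, Module.End.natCast_apply, map_nsmul]

/-- If `rho x y = 0` then `‖citer x y n‖` decays faster than any geometric sequence. -/
lemma aux_geom {A : Type*} [NormedRing A] (x y : A) (h : rho x y = 0) :
    ∀ ε : ℝ, 0 < ε → ∃ C : ℝ, 0 < C ∧ ∀ n : ℕ, ‖citer x y n‖ ≤ C * ε ^ n := by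
  set K : ℝ := ‖x‖ + ‖y‖ + 1 with hKdef
  have hK1 : (1 : ℝ) ≤ K := by
    have := norm_nonneg x; have := norm_nonneg y; simp only [hKdef]; linarith
  set M : ℝ := max 1 ‖(1 : A)‖ with hMdef
  have hM1 : (1 : ℝ) ≤ M := le_max_left _ _
  have hcb : ∀ n : ℕ, ‖citer x y n‖ ≤ ‖(1 : A)‖ * K ^ n := by
    intro n
    induction n with
    | zero => simp [citer_zero]
    | succ n ih =>
      rw [citer_succ]
      calc ‖x * citer x y n - citer x y n * y‖
          ≤ ‖x * citer x y n‖ + ‖citer x y n * y‖ := norm_sub_le _ _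
        _ ≤ ‖x‖ * ‖citer x y n‖ + ‖citer x y n‖ * ‖y‖ := by
            gcongr <;> [exact norm_mul_le _ _; exact norm_mul_le _ _]
        _ = (‖x‖ + ‖y‖) * ‖citer x y n‖ := by ring
        _ ≤ K * (‖(1:A)‖ * K ^ n) := by
            have hxy : ‖x‖ + ‖y‖ ≤ K := by simp [hKdef]
            have h0 : (0:ℝ) ≤ ‖x‖ + ‖y‖ := by positivity
            calc (‖x‖ + ‖y‖) * ‖citer x y n‖ ≤ K * ‖citer x y n‖ := by
                  gcongr
              _ ≤ K * (‖(1:A)‖ * K ^ n) := by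
                  have : (0:ℝ) < K := by linarith
                  gcongr
        _ = ‖(1:A)‖ * K ^ (n+1) := by ring
  set B : ℝ := K * M with hBdef
  have hB1 : (1 : ℝ) ≤ B := one_le_mul_of_one_le_of_one_le hK1 hM1
  have hB0 : (0 : ℝ) ≤ B := by linarith
  set f : ℕ → ℝ := fun n => ‖citer x y n‖ ^ ((n : ℝ)⁻¹) with hfdef
  have hfb : ∀ n, f n ≤ B := by
    intro n
    match n with
    | 0 => simp [hfdef]; linarith
    | (n+1) =>
      have hc : ‖citer x y (n+1)‖ ≤ B ^ (n+1) := by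
        calc ‖citer x y (n+1)‖ ≤ ‖(1:A)‖ * K ^ (n+1) := hcb (n+1)
          _ ≤ K ^ (n+1) * M ^ (n+1) := by
              have h1 : ‖(1:A)‖ ≤ M := le_max_right _ _
              have h2 : M ≤ M ^ (n+1) := le_self_pow₀ (by linarith) (Nat.succ_ne_zero n)
              have hKp : (0:ℝ) < K ^ (n+1) := by positivity
              nlinarith
          _ = B ^ (n+1) := by rw [hBdef, mul_pow]
      have h2 : f (n+1) ≤ (B ^ (n+1)) ^ (((n+1 : ℕ) : ℝ))⁻¹ :=
        Real.rpow_le_rpow (norm_nonneg _) hc (by positivity)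
      rwa [Real.pow_rpow_inv_natCast hB0 (Nat.succ_ne_zero n)] at h2
  intro ε hε
  have hbdd : IsBoundedUnder (· ≤ ·) atTop f := Filter.isBoundedUnder_of ⟨B, hfb⟩
  have hlim : limsup f atTop < ε := by
    have : limsup f atTop = 0 := h
    rw [this]; exact hε
  have hev : ∀ᶠ n in atTop, f n < ε := eventually_lt_of_limsup_lt hlim hbdd
  obtain ⟨N, hN⟩ := eventually_atTop.mp hev
  set C : ℝ := 1 + ∑ k ∈ Finset.range (N + 1), ‖citer x y k‖ / ε ^ k with hCdef
  have hterm : ∀ k, (0:ℝ) ≤ ‖citer x y k‖ / ε ^ k := fun k => by positivity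
  have hC1 : (1:ℝ) ≤ C := by
    have : (0:ℝ) ≤ ∑ k ∈ Finset.range (N + 1), ‖citer x y k‖ / ε ^ k :=
      Finset.sum_nonneg fun k _ => hterm k
    rw [hCdef]; linarith
  refine ⟨C, by linarith, fun n => ?_⟩
  rcases le_or_gt n N with hn | hn
  · have hmem : n ∈ Finset.range (N + 1) := Finset.mem_range.mpr (by omega)
    have : ‖citer x y n‖ / ε ^ n ≤ C := by
      have h2 := Finset.single_le_sum (fun k _ => hterm k) hmem
      rw [hCdef]; linarith
    calc ‖citer x y n‖ = ‖citer x y n‖ / ε ^ n * ε ^ n := by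
          field_simp
      _ ≤ C * ε ^ n := by gcongr
  · have hn1 : n ≠ 0 := by omega
    have hfn : f n < ε := hN n (by omega)
    have : ‖citer x y n‖ ≤ ε ^ n := by
      have h1 : (f n) ^ n ≤ ε ^ n := pow_le_pow_left₀ (Real.rpow_nonneg (norm_nonneg _) _) hfn.le n
      rwa [hfdef, Real.rpow_inv_natCast_pow (norm_nonneg _) hn1] at h1
    calc ‖citer x y n‖ ≤ ε ^ n := this
      _ ≤ C * ε ^ n := by nlinarith [pow_pos hε n]

/-- Spectrum is contained in the closed unit disc when the squared norms of powers grow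
slower than `(1+ε)^n` for every `ε`. -/
lemma aux_abs_le {A : Type*} [NormedRing A] [CompleteSpace A] [NormedAlgebra ℂ A] [NormOneClass A]
    (b : A) (hb : ∀ ε : ℝ, 0 < ε → ∃ C : ℝ, 0 < C ∧ ∀ n : ℕ, ‖b ^ n‖ ^ 2 ≤ C * (1 + ε) ^ n)
    {z : ℂ} (hz : z ∈ spectrum ℂ b) : ‖z‖ ≤ 1 := by
  have habs : ∀ n : ℕ, (‖z‖) ^ n ≤ ‖b ^ n‖ := by
    intro n
    have hmem : z ^ n ∈ spectrum ℂ (b ^ n) := by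
      have h := spectrum.subset_polynomial_aeval b (Polynomial.X ^ n : Polynomial ℂ)
      have h2 : z ^ n ∈ (fun x => Polynomial.eval x (Polynomial.X ^ n : Polynomial ℂ)) ''
          spectrum ℂ b := ⟨z, hz, by simp⟩
      simpa using h h2
    simpa [map_pow] using spectrum.norm_le_norm_of_mem hmem
  have hsq : ∀ ε : ℝ, 0 < ε → (‖z‖) ^ 2 ≤ 1 + ε := by
    intro ε hε
    obtain ⟨C, hC, hCn⟩ := hb ε hε
    by_contra hcon
    push_neg at hcon
    have h1 : (1:ℝ) < (‖z‖) ^ 2 / (1 + ε) := by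
      rw [lt_div_iff₀ (by linarith)]; linarith
    obtain ⟨n, hn⟩ := (tendsto_pow_atTop_atTop_of_one_lt h1).eventually_gt_atTop C |>.exists
    have h2 : ((‖z‖) ^ 2) ^ n ≤ C * (1 + ε) ^ n := by
      calc ((‖z‖) ^ 2) ^ n = ((‖z‖) ^ n) ^ 2 := by ring
        _ ≤ ‖b ^ n‖ ^ 2 := by
            have := habs n
            have h0 : (0:ℝ) ≤ (‖z‖) ^ n := by positivity
            nlinarith
        _ ≤ C * (1 + ε) ^ n := hCn n
    rw [div_pow, lt_div_iff₀ (by positivity)] at hn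
    linarith
  have h3 : (‖z‖) ^ 2 ≤ 1 := le_of_forall_pos_le_add hsq
  nlinarith [norm_nonneg z]

/-- Binomial norm bound for `(f^n) 1` given geometric control of `((f-1)^k) 1`. -/
lemma binom_bound {A : Type*} [NormedRing A] [NormedAlgebra ℂ A] (f : Module.End ℂ A)
    {C ε : ℝ} (hC : 0 ≤ C) (hk : ∀ k : ℕ, ‖((f - 1) ^ k) 1‖ ≤ C * ε ^ k) (n : ℕ) :
    ‖(f ^ n) 1‖ ≤ C * (1 + ε) ^ n := by
  calc ‖(f ^ n) 1‖ = ‖∑ k ∈ range (n+1), n.choose k • (((f - 1) ^ k) 1)‖ := by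
        rw [end_binom]
    _ ≤ ∑ k ∈ range (n+1), (n.choose k : ℝ) * (C * ε ^ k) := by
        refine (norm_sum_le _ _).trans (Finset.sum_le_sum fun k _ => ?_)
        exact (norm_nsmul_le).trans (mul_le_mul_of_nonneg_left (hk k) (Nat.cast_nonneg _))
    _ = C * (1 + ε) ^ n := by
        rw [add_comm (1:ℝ) ε, add_pow, Finset.mul_sum]
        exact Finset.sum_congr rfl fun k _ => by ring

/-- If ρ(a*, a⁻¹) = 0 for an invertible element of a C*-algebra,
then σ(a) lies on the unit circle. -/
theorem stmt_15 {A : Type*} [NormedRing A] [StarRing A] [CStarRing A] [CompleteSpace A]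
    [NormedAlgebra ℂ A] [StarModule ℂ A]
    (a : Aˣ) (h : rho (star (a : A)) ((a⁻¹ : Aˣ) : A) = 0) :
    ∀ z ∈ spectrum ℂ (a : A), ‖z‖ = 1 := by
  obtain hA | hA := subsingleton_or_nontrivial A
  · intro z hz
    exact absurd (isUnit_of_subsingleton _) (spectrum.mem_iff.mp hz)
  have hgeom := aux_geom (star (a : A)) ((a⁻¹ : Aˣ) : A) h
  set c : ℕ → A := citer (star (a : A)) ((a⁻¹ : Aˣ) : A) with hcdef
  set Φ : Module.End ℂ A :=
    (LinearMap.mulLeft ℂ (star (a : A))) * (LinearMap.mulRight ℂ ((a : A))) with hΦdef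
  set Ψ : Module.End ℂ A :=
    (LinearMap.mulLeft ℂ (star ((a⁻¹ : Aˣ) : A))) * (LinearMap.mulRight ℂ (((a⁻¹ : Aˣ) : A)))
    with hΨdef
  have hΦ : ∀ v : A, Φ v = star (a : A) * v * (a : A) := fun v => by
    simp [hΦdef, Module.End.mul_apply, mul_assoc]
  have hΨ : ∀ v : A, Ψ v = star ((a⁻¹ : Aˣ) : A) * v * ((a⁻¹ : Aˣ) : A) := fun v => by
    simp [hΨdef, Module.End.mul_apply, mul_assoc]
  -- (Φ-1)^n applied to 1 is c n * a^n
  have hΦm : ∀ n : ℕ, ((Φ - 1) ^ n) 1 = c n * (a : A) ^ n := by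
    intro n
    induction n with
    | zero => simp [hcdef, citer_zero]
    | succ n ih =>
      have key : ((a⁻¹ : Aˣ) : A) * ((a : A)) ^ (n+1) = (a : A) ^ n := by
        rw [← Units.val_pow_eq_pow_val, ← Units.val_pow_eq_pow_val, ← Units.val_mul]
        congr 1
        group
      rw [pow_succ', Module.End.mul_apply, ih, LinearMap.sub_apply, Module.End.one_apply, hΦ,
        hcdef, citer_succ, sub_mul, mul_assoc (citer (star (a:A)) ((a⁻¹ : Aˣ) : A) n), key,
        pow_succ]
      noncomm_ring
  -- Φ^n applied to 1 is (a^n)* aⁿ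
  have hΦn : ∀ n : ℕ, (Φ ^ n) 1 = (star (a : A)) ^ n * (a : A) ^ n := by
    intro n
    induction n with
    | zero => simp
    | succ n ih =>
      have heq : (star ((a:Aˣ):A)) ^ (n+1) * ((a:Aˣ):A) ^ (n+1)
          = star ((a:Aˣ):A) * ((star ((a:Aˣ):A)) ^ n * ((a:Aˣ):A) ^ n) * ((a:Aˣ):A) := by
        rw [pow_succ' (star ((a:Aˣ):A)), pow_succ (((a:Aˣ):A))]
        simp only [mul_assoc]
      rw [pow_succ', Module.End.mul_apply, ih, hΦ, heq]
  have hΨn : ∀ n : ℕ, ∀ v : A,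
      (Ψ ^ n) v = (star ((a⁻¹ : Aˣ) : A)) ^ n * v * ((a⁻¹ : Aˣ) : A) ^ n := by
    intro n
    induction n with
    | zero => intro v; simp
    | succ n ih =>
      intro v
      have heq : (star ((a⁻¹:Aˣ):A)) ^ (n+1) * v * ((a⁻¹:Aˣ):A) ^ (n+1)
          = star ((a⁻¹:Aˣ):A) * ((star ((a⁻¹:Aˣ):A)) ^ n * v * ((a⁻¹:Aˣ):A) ^ n)
            * ((a⁻¹:Aˣ):A) := by
        rw [pow_succ' (star ((a⁻¹:Aˣ):A)), pow_succ (((a⁻¹:Aˣ):A))]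
        simp only [mul_assoc]
      rw [pow_succ', Module.End.mul_apply, ih, hΨ, heq]
  -- Ψ and Φ are mutually inverse
  have h1 : star ((a⁻¹ : Aˣ) : A) * star ((a : A)) = 1 := by
    rw [← star_mul, Units.mul_inv, star_one]
  have h1' : star ((a : A)) * star ((a⁻¹ : Aˣ) : A) = 1 := by
    rw [← star_mul, Units.inv_mul, star_one]
  have hΨΦ : Ψ * Φ = 1 := by
    ext v
    simp only [Module.End.mul_apply, Module.End.one_apply, hΨ, hΦ]
    calc star ((a⁻¹ : Aˣ) : A) * (star (a:A) * v * (a:A)) * ((a⁻¹ : Aˣ) : A)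
        = (star ((a⁻¹ : Aˣ) : A) * star (a:A)) * v * ((a:A) * ((a⁻¹ : Aˣ) : A)) := by
          simp only [mul_assoc]
      _ = v := by rw [h1, Units.mul_inv, one_mul, mul_one]
  have hΦΨ : Φ * Ψ = 1 := by
    ext v
    simp only [Module.End.mul_apply, Module.End.one_apply, hΨ, hΦ]
    calc star ((a : Aˣ) : A) * (star ((a⁻¹ : Aˣ) : A) * v * ((a⁻¹ : Aˣ) : A)) * ((a : Aˣ) : A)
        = (star ((a : Aˣ) : A) * star ((a⁻¹ : Aˣ) : A)) * v * (((a⁻¹ : Aˣ) : A) * (a : A)) := by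
          simp only [mul_assoc]
      _ = v := by rw [h1', Units.inv_mul, one_mul, mul_one]
  have hcomm : Commute Ψ (Φ - 1) := by
    unfold Commute SemiconjBy
    rw [mul_sub, sub_mul, hΨΦ, hΦΨ, mul_one, one_mul]
  have hneg : Ψ - 1 = -(Ψ * (Φ - 1)) := by
    rw [mul_sub, mul_one, hΨΦ, neg_sub]
  have hpows : ∀ n : ℕ, (Ψ - 1) ^ n = (-1) ^ n * (Ψ ^ n * (Φ - 1) ^ n) := by
    intro n
    rw [hneg, neg_pow, hcomm.mul_pow]
  -- norm of the Ψ-iterates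
  have hq : ∀ n : ℕ, ‖((Ψ - 1) ^ n) 1‖ ≤
      ‖((a⁻¹ : Aˣ) : A)‖ ^ n * (‖c n‖ * ‖(a : A)‖ ^ n) * ‖((a⁻¹ : Aˣ) : A)‖ ^ n := by
    intro n
    have hval : ‖((Ψ - 1) ^ n) 1‖ = ‖(Ψ ^ n) (((Φ - 1) ^ n) 1)‖ := by
      rw [hpows n]
      rcases Nat.even_or_odd n with he | ho
      · rw [he.neg_one_pow, one_mul, Module.End.mul_apply]
      · rw [ho.neg_one_pow, neg_one_mul, LinearMap.neg_apply, norm_neg, Module.End.mul_apply]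
    rw [hval, hΨn, hΦm]
    calc ‖(star ((a⁻¹ : Aˣ) : A)) ^ n * (c n * (a:A) ^ n) * ((a⁻¹ : Aˣ) : A) ^ n‖
        ≤ ‖(star ((a⁻¹ : Aˣ) : A)) ^ n * (c n * (a:A) ^ n)‖ * ‖((a⁻¹ : Aˣ) : A) ^ n‖ :=
          norm_mul_le _ _
      _ ≤ ‖(star ((a⁻¹ : Aˣ) : A)) ^ n‖ * ‖c n * (a:A) ^ n‖ * ‖((a⁻¹ : Aˣ) : A) ^ n‖ := by
          gcongr; exact norm_mul_le _ _
      _ ≤ ‖((a⁻¹ : Aˣ) : A)‖ ^ n * (‖c n‖ * ‖(a : A)‖ ^ n) * ‖((a⁻¹ : Aˣ) : A)‖ ^ n := by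
          gcongr
          · calc ‖(star ((a⁻¹ : Aˣ) : A)) ^ n‖ ≤ ‖star ((a⁻¹ : Aˣ) : A)‖ ^ n := norm_pow_le _ _
              _ = ‖((a⁻¹ : Aˣ) : A)‖ ^ n := by rw [norm_star]
          · calc ‖c n * (a:A) ^ n‖ ≤ ‖c n‖ * ‖(a:A) ^ n‖ := norm_mul_le _ _
              _ ≤ ‖c n‖ * ‖(a : A)‖ ^ n := by gcongr; exact norm_pow_le _ _
          · exact norm_pow_le _ _
  -- squared norms of powers of a
  have hmain : ∀ ε : ℝ, 0 < ε → ∃ C : ℝ, 0 < C ∧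
      ∀ n : ℕ, ‖(a : A) ^ n‖ ^ 2 ≤ C * (1 + ε) ^ n := by
    intro ε hε
    have hδ : (0:ℝ) < ε / (‖(a : A)‖ + 1) := by positivity
    obtain ⟨C, hC, hCk⟩ := hgeom _ hδ
    refine ⟨C, hC, fun n => ?_⟩
    have hk : ∀ k : ℕ, ‖((Φ - 1) ^ k) 1‖ ≤ C * ε ^ k := by
      intro k
      rw [hΦm]
      calc ‖c k * (a:A) ^ k‖ ≤ ‖c k‖ * ‖(a:A) ^ k‖ := norm_mul_le _ _
        _ ≤ (C * (ε / (‖(a : A)‖ + 1)) ^ k) * ‖(a : A)‖ ^ k := by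
            gcongr
            · exact hCk k
            · exact norm_pow_le _ _
        _ = C * ((ε / (‖(a : A)‖ + 1)) * ‖(a : A)‖) ^ k := by rw [mul_pow]; ring
        _ ≤ C * ε ^ k := by
            gcongr
            rw [div_mul_eq_mul_div, div_le_iff₀ (by positivity)]
            nlinarith [norm_nonneg ((a : A)), hε]
    have := binom_bound Φ hC.le hk n
    calc ‖(a : A) ^ n‖ ^ 2 = ‖star ((a:A) ^ n) * (a:A) ^ n‖ := by
          rw [CStarRing.norm_star_mul_self, sq]
      _ = ‖(Φ ^ n) 1‖ := by rw [hΦn, star_pow]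
      _ ≤ C * (1 + ε) ^ n := this
  -- squared norms of powers of a⁻¹
  have hmain' : ∀ ε : ℝ, 0 < ε → ∃ C : ℝ, 0 < C ∧
      ∀ n : ℕ, ‖((a⁻¹ : Aˣ) : A) ^ n‖ ^ 2 ≤ C * (1 + ε) ^ n := by
    intro ε hε
    obtain ⟨D, hD, hεD⟩ : ∃ D : ℝ, 0 < D ∧
        ε / D * ((‖((a⁻¹ : Aˣ) : A)‖ + 1) ^ 2 * (‖(a : A)‖ + 1)) = ε := by
      refine ⟨(‖((a⁻¹ : Aˣ) : A)‖ + 1) ^ 2 * (‖(a : A)‖ + 1), by positivity, ?_⟩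
      field_simp
    have hδ : (0:ℝ) < ε / D := by positivity
    obtain ⟨C, hC, hCk⟩ := hgeom _ hδ
    refine ⟨C, hC, fun n => ?_⟩
    have hk : ∀ k : ℕ, ‖((Ψ - 1) ^ k) 1‖ ≤ C * ε ^ k := by
      intro k
      refine (hq k).trans ?_
      have hb1 : ‖c k‖ ≤ C * (ε / D) ^ k := hCk k
      have hnn : (0:ℝ) ≤ ‖((a⁻¹ : Aˣ) : A)‖ := norm_nonneg _
      have hna : (0:ℝ) ≤ ‖(a : A)‖ := norm_nonneg _
      calc ‖((a⁻¹ : Aˣ) : A)‖ ^ k * (‖c k‖ * ‖(a : A)‖ ^ k) * ‖((a⁻¹ : Aˣ) : A)‖ ^ k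
          ≤ (‖((a⁻¹ : Aˣ) : A)‖ + 1) ^ k * ((C * (ε / D) ^ k) * (‖(a : A)‖ + 1) ^ k) *
            (‖((a⁻¹ : Aˣ) : A)‖ + 1) ^ k := by
            gcongr <;> simp [hb1] <;> linarith
        _ = C * ((ε / D) ^ k * (((‖((a⁻¹ : Aˣ) : A)‖ + 1) ^ 2) ^ k * (‖(a : A)‖ + 1) ^ k)) := by
            rw [← pow_mul, two_mul, pow_add]
            ring
        _ = C * ((ε / D) * ((‖((a⁻¹ : Aˣ) : A)‖ + 1) ^ 2 * (‖(a : A)‖ + 1))) ^ k := by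
            rw [mul_pow, mul_pow]
        _ = C * ε ^ k := by rw [hεD]
    have := binom_bound Ψ hC.le hk n
    calc ‖((a⁻¹ : Aˣ) : A) ^ n‖ ^ 2 = ‖star (((a⁻¹ : Aˣ) : A) ^ n) * ((a⁻¹ : Aˣ) : A) ^ n‖ := by
          rw [CStarRing.norm_star_mul_self, sq]
      _ = ‖(Ψ ^ n) 1‖ := by rw [hΨn, star_pow, mul_one]
      _ ≤ C * (1 + ε) ^ n := this
  -- conclude
  intro z hz
  have hz0 : z ≠ 0 := by
    intro hz0
    rw [hz0] at hz
    exact (spectrum.zero_notMem ℂ a.isUnit) hz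
  have hle : ‖z‖ ≤ 1 := aux_abs_le _ hmain hz
  have hinv : (z⁻¹ : ℂ) ∈ spectrum ℂ ((a⁻¹ : Aˣ) : A) := by
    have := (@spectrum.inv_mem_iff ℂ A _ _ _ (Units.mk0 z hz0) a).mp (by simpa using hz)
    simpa using this
  have hle' : ‖z⁻¹‖ ≤ 1 := aux_abs_le _ hmain' hinv
  rw [norm_inv] at hle'
  have hpos : 0 < ‖z‖ := by
    simpa [norm_pos_iff] using hz0
  have : (1:ℝ) ≤ ‖z‖ := by
    calc (1:ℝ) = ‖z‖ * (‖z‖)⁻¹ := (mul_inv_cancel₀ (ne_of_gt hpos)).symm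
      _ ≤ ‖z‖ * 1 := by gcongr
      _ = ‖z‖ := mul_one _
  linarith
end
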